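/- Suppose s > 2, 2 ≤ k ≤ s-1, (γ,d) = (n_k, m_k), l₁ = (n_{k+1} - n_k)/(m_k - m_{k+1}), and l₁ + l₂ = (n_k - n_{k-1})/(m_{k-1} - m_k). If T_{k-1} ≤ δ ≤ T_k, then for every (i,j) with b_{ij} ≠ 0: γ + l₁ d ≥ i + l₁ j, γ + l₁ d ≥ l₁ δ, and (l₁+l₂) δ ≥ γ + (l₁+l₂) d ≥ i + (l₁+l₂) j. -/

import Mathlib

open Set

noncomputable section

/-- The quadrant `D(i,j) = {(x,y) : x ≤ i, y ≤ j}`. -/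
def quadrant (i j : ℕ) : Set (ℝ × ℝ) := {p | p.1 ≤ (i : ℝ) ∧ p.2 ≤ (j : ℝ)}

/-- The Newton polygon of `q = Σ b_{ij} z^i w^j`: the convex hull of the union of
the quadrants `D(i,j)` over all `(i,j)` with `b_{ij} ≠ 0`. -/
def newtonPolygon (b : ℕ → ℕ → ℂ) : Set (ℝ × ℝ) :=
  convexHull ℝ (⋃ (i : ℕ) (j : ℕ) (_ : b i j ≠ 0), quadrant i j)

/-- `n, m : ℕ → ℕ` (on indices `1,…,s`) enumerate the vertices of the Newton polygon
of `q`, with `n 1 < … < n s` and `m 1 > … > m s`. -/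
def IsNewtonVertexData (b : ℕ → ℕ → ℂ) (s : ℕ) (n m : ℕ → ℕ) : Prop :=
  1 ≤ s ∧
  StrictMonoOn n (Set.Icc 1 s) ∧
  StrictAntiOn m (Set.Icc 1 s) ∧
  Set.extremePoints ℝ (newtonPolygon b) =
    (fun k => ((n k : ℝ), (m k : ℝ))) '' (Set.Icc 1 s)

lemma quad_subset (b : ℕ → ℕ → ℂ) {i j : ℕ} (hb : b i j ≠ 0) :
    quadrant i j ⊆ newtonPolygon b := by
  refine Subset.trans ?_ (subset_convexHull ℝ _)
  exact subset_iUnion₂_of_subset i j (subset_iUnion_of_subset hb (by rfl))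

lemma np_convex (b : ℕ → ℕ → ℂ) : Convex ℝ (newtonPolygon b) := convex_convexHull ℝ _

lemma mem_np_self (b : ℕ → ℕ → ℂ) {i j : ℕ} (hb : b i j ≠ 0) :
    ((i:ℝ), (j:ℝ)) ∈ newtonPolygon b :=
  quad_subset b hb ⟨le_refl _, le_refl _⟩

lemma halfspace_bound (b : ℕ → ℕ → ℂ) (μ C : ℝ) (hμ : 0 ≤ μ)
    (hC : ∀ i j : ℕ, b i j ≠ 0 → (i:ℝ) + μ * (j:ℝ) ≤ C) :
    ∀ Z ∈ newtonPolygon b, Z.1 + μ * Z.2 ≤ C := by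
  have hconv : Convex ℝ {z : ℝ × ℝ | z.1 + μ * z.2 ≤ C} := by
    intro z hz w hw a c ha hc hac
    simp only [mem_setOf_eq] at *
    have : (a • z + c • w).1 + μ * (a • z + c • w).2
        = a * (z.1 + μ * z.2) + c * (w.1 + μ * w.2) := by
      simp [Prod.smul_def, smul_eq_mul]; ring
    rw [this]
    calc a * (z.1 + μ * z.2) + c * (w.1 + μ * w.2) ≤ a * C + c * C :=
          add_le_add (mul_le_mul_of_nonneg_left hz ha) (mul_le_mul_of_nonneg_left hw hc)
      _ = C := by rw [← add_mul, hac, one_mul]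
  have : newtonPolygon b ⊆ {z : ℝ × ℝ | z.1 + μ * z.2 ≤ C} := by
    apply convexHull_min _ hconv
    rintro z hz
    simp only [mem_iUnion] at hz
    obtain ⟨i, j, hb, hz1, hz2⟩ := hz
    have := hC i j hb
    simp only [mem_setOf_eq]
    nlinarith [mul_le_mul_of_nonneg_left hz2 hμ]
  exact fun Z hZ => this hZ


lemma vertex_extreme {b : ℕ → ℕ → ℂ} {s : ℕ} {n m : ℕ → ℕ}
    (h : IsNewtonVertexData b s n m) {t : ℕ} (ht : t ∈ Icc 1 s) :
    ((n t : ℝ), (m t : ℝ)) ∈ Set.extremePoints ℝ (newtonPolygon b) := by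
  rw [h.2.2.2]; exact ⟨t, ht, rfl⟩

lemma kill_extreme (b : ℕ → ℕ → ℂ) {p X Z : ℝ × ℝ}
    (hp : p ∈ Set.extremePoints ℝ (newtonPolygon b))
    (hX : X ∈ newtonPolygon b) (hZ : Z ∈ newtonPolygon b) {a c : ℝ} (ha : 0 < a) (hc : 0 < c)
    (hac : a + c = 1) (heq : a • X + c • Z = p) (hne : Z ≠ p) : False :=
  hne (hp.2 hZ hX ⟨c, a, hc, ha, by rw [add_comm]; exact hac, by rw [add_comm]; exact heq⟩)

lemma vertex_nonzero {b : ℕ → ℕ → ℂ} {s : ℕ} {n m : ℕ → ℕ}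
    (h : IsNewtonVertexData b s n m) {t : ℕ} (ht : t ∈ Icc 1 s) :
    b (n t) (m t) ≠ 0 := by
  have hext := vertex_extreme h ht
  have hmem : ((n t : ℝ), (m t : ℝ)) ∈ ⋃ (i : ℕ) (j : ℕ) (_ : b i j ≠ 0), quadrant i j :=
    extremePoints_convexHull_subset hext
  simp only [mem_iUnion] at hmem
  obtain ⟨i, j, hb, hij⟩ := hmem
  obtain ⟨h1, h2⟩ := hij
  have h1' : n t ≤ i := by
    have h1a : (n t : ℝ) ≤ (i : ℝ) := h1
    exact_mod_cast h1a
  have h2' : m t ≤ j := by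
    have h2a : (m t : ℝ) ≤ (j : ℝ) := h2
    exact_mod_cast h2a
  have h1r : (n t : ℝ) ≤ i := by exact_mod_cast h1'
  have h2r : (m t : ℝ) ≤ j := by exact_mod_cast h2'
  have hni : n t = i := by
    by_contra hne
    have hlt : n t < i := lt_of_le_of_ne h1' hne
    have hltr : (n t : ℝ) + 1 ≤ i := by exact_mod_cast hlt
    have hX : ((n t : ℝ) - 1, (m t : ℝ)) ∈ newtonPolygon b :=
      quad_subset b hb ⟨show (n t : ℝ) - 1 ≤ i by linarith, show (m t : ℝ) ≤ j from h2r⟩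
    have hZ : ((n t : ℝ) + 1, (m t : ℝ)) ∈ newtonPolygon b :=
      quad_subset b hb ⟨show (n t : ℝ) + 1 ≤ i from hltr, show (m t : ℝ) ≤ j from h2r⟩
    refine kill_extreme b hext hX hZ (a := 1/2) (c := 1/2) (by norm_num) (by norm_num)
      (by norm_num) ?_ ?_
    · ext
      · show 1/2 * ((n t : ℝ) - 1) + 1/2 * ((n t : ℝ) + 1) = (n t : ℝ); ring
      · show 1/2 * (m t : ℝ) + 1/2 * (m t : ℝ) = (m t : ℝ); ring
    · intro hcon
      have := congrArg Prod.fst hcon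
      simp at this
  have hmj : m t = j := by
    by_contra hne
    have hlt : m t < j := lt_of_le_of_ne h2' hne
    have hltr : (m t : ℝ) + 1 ≤ j := by exact_mod_cast hlt
    have hX : ((n t : ℝ), (m t : ℝ) - 1) ∈ newtonPolygon b :=
      quad_subset b hb ⟨show (n t : ℝ) ≤ i from h1r, show (m t : ℝ) - 1 ≤ j by linarith⟩
    have hZ : ((n t : ℝ), (m t : ℝ) + 1) ∈ newtonPolygon b :=
      quad_subset b hb ⟨show (n t : ℝ) ≤ i from h1r, show (m t : ℝ) + 1 ≤ j from hltr⟩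
    refine kill_extreme b hext hX hZ (a := 1/2) (c := 1/2) (by norm_num) (by norm_num)
      (by norm_num) ?_ ?_
    · ext
      · show 1/2 * (n t : ℝ) + 1/2 * (n t : ℝ) = (n t : ℝ); ring
      · show 1/2 * ((m t : ℝ) - 1) + 1/2 * ((m t : ℝ) + 1) = (m t : ℝ); ring
    · intro hcon
      have := congrArg Prod.snd hcon
      simp at this
  rw [hni, hmj]; exact hb

lemma killH {b : ℕ → ℕ → ℂ} {s : ℕ} {n m : ℕ → ℕ}
    (h : IsNewtonVertexData b s n m) {t : ℕ} (ht : t ∈ Icc 1 s) {Z : ℝ × ℝ}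
    (hZ : Z ∈ newtonPolygon b) (hZ2 : Z.2 = (m t : ℝ)) (hZ1 : (n t : ℝ) < Z.1) : False := by
  have hext := vertex_extreme h ht
  have hX : ((n t : ℝ) - 1, (m t : ℝ)) ∈ newtonPolygon b :=
    quad_subset b (vertex_nonzero h ht)
      ⟨show (n t : ℝ) - 1 ≤ (n t : ℝ) by linarith, show (m t : ℝ) ≤ (m t : ℝ) from le_refl _⟩
  have hu0 : (0:ℝ) < Z.1 - n t := by linarith
  have hu1 : (0:ℝ) < Z.1 - n t + 1 := by linarith
  refine kill_extreme b hext hX hZ (a := (Z.1 - n t)/(Z.1 - n t + 1)) (c := 1/(Z.1 - n t + 1))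
    (div_pos hu0 hu1) (div_pos one_pos hu1) (by field_simp) ?_ ?_
  · have hZeq : Z = (Z.1, Z.2) := rfl
    rw [hZeq]
    ext
    · show (Z.1 - n t)/(Z.1 - n t + 1) * ((n t : ℝ) - 1) + 1/(Z.1 - n t + 1) * Z.1 = (n t : ℝ)
      field_simp
      ring
    · show (Z.1 - n t)/(Z.1 - n t + 1) * (m t : ℝ) + 1/(Z.1 - n t + 1) * Z.2 = (m t : ℝ)
      rw [hZ2]; field_simp
  · intro hcon
    rw [hcon] at hZ1
    simp at hZ1

lemma killV {b : ℕ → ℕ → ℂ} {s : ℕ} {n m : ℕ → ℕ}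
    (h : IsNewtonVertexData b s n m) {t : ℕ} (ht : t ∈ Icc 1 s) {Z : ℝ × ℝ}
    (hZ : Z ∈ newtonPolygon b) (hZ1 : Z.1 = (n t : ℝ)) (hZ2 : (m t : ℝ) < Z.2) : False := by
  have hext := vertex_extreme h ht
  have hX : ((n t : ℝ), (m t : ℝ) - 1) ∈ newtonPolygon b :=
    quad_subset b (vertex_nonzero h ht)
      ⟨show (n t : ℝ) ≤ (n t : ℝ) from le_refl _, show (m t : ℝ) - 1 ≤ (m t : ℝ) by linarith⟩
  have hu0 : (0:ℝ) < Z.2 - m t := by linarith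
  have hu1 : (0:ℝ) < Z.2 - m t + 1 := by linarith
  refine kill_extreme b hext hX hZ (a := (Z.2 - m t)/(Z.2 - m t + 1)) (c := 1/(Z.2 - m t + 1))
    (div_pos hu0 hu1) (div_pos one_pos hu1) (by field_simp) ?_ ?_
  · have hZeq : Z = (Z.1, Z.2) := rfl
    rw [hZeq]
    ext
    · show (Z.2 - m t)/(Z.2 - m t + 1) * (n t : ℝ) + 1/(Z.2 - m t + 1) * Z.1 = (n t : ℝ)
      rw [hZ1]; field_simp
    · show (Z.2 - m t)/(Z.2 - m t + 1) * ((m t : ℝ) - 1) + 1/(Z.2 - m t + 1) * Z.2 = (m t : ℝ)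
      field_simp
      ring
  · intro hcon
    rw [hcon] at hZ2
    simp at hZ2

lemma vertex_mem_np {b : ℕ → ℕ → ℂ} {s : ℕ} {n m : ℕ → ℕ}
    (h : IsNewtonVertexData b s n m) {t : ℕ} (ht : t ∈ Icc 1 s) :
    ((n t : ℝ), (m t : ℝ)) ∈ newtonPolygon b :=
  quad_subset b (vertex_nonzero h ht) ⟨le_refl _, le_refl _⟩

lemma boundX {b : ℕ → ℕ → ℂ} {s : ℕ} {n m : ℕ → ℕ}
    (h : IsNewtonVertexData b s n m) (hs : 2 < s) :
    ∀ i j : ℕ, b i j ≠ 0 → i ≤ n s * m (s-1) + n s := by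
  intro i j hb
  have hs1 : s - 1 ∈ Icc 1 s := by constructor <;> omega
  have hss : s ∈ Icc 1 s := by constructor <;> omega
  have hmlt : m s < m (s-1) := h.2.2.1 hs1 hss (by omega)
  by_cases hj : m s ≤ j
  · -- then i ≤ n s
    have hle : i ≤ n s := by
      by_contra hni
      push_neg at hni
      have hZ : ((i:ℝ), (m s : ℝ)) ∈ newtonPolygon b :=
        quad_subset b hb ⟨le_refl _, show (m s : ℝ) ≤ j by exact_mod_cast hj⟩
      exact killH h hss hZ rfl (show (n s : ℝ) < i by exact_mod_cast hni)
    calc i ≤ n s := hle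
      _ ≤ n s * m (s-1) + n s := by omega
  · push_neg at hj
    -- j < m s < m (s-1)
    have hjr : (j:ℝ) < m s := by exact_mod_cast hj
    have hmr : (m s : ℝ) < m (s-1) := by exact_mod_cast hmlt
    set a : ℝ := ((m s : ℝ) - j)/((m (s-1) : ℝ) - j) with ha_def
    set c : ℝ := ((m (s-1) : ℝ) - m s)/((m (s-1) : ℝ) - j) with hc_def
    have hden : (0:ℝ) < (m (s-1) : ℝ) - j := by linarith
    have ha : 0 < a := div_pos (by linarith) hden
    have hc : 0 < c := div_pos (by linarith) hden
    have hac : a + c = 1 := by rw [ha_def, hc_def]; field_simp; ring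
    have hZmem : a • ((n (s-1) : ℝ), (m (s-1) : ℝ)) + c • ((i:ℝ), (j:ℝ)) ∈ newtonPolygon b :=
      (np_convex b) (vertex_mem_np h hs1) (mem_np_self b hb) (le_of_lt ha) (le_of_lt hc) hac
    have hZ2 : (a • ((n (s-1) : ℝ), (m (s-1) : ℝ)) + c • ((i:ℝ), (j:ℝ))).2 = (m s : ℝ) := by
      show a * (m (s-1) : ℝ) + c * (j : ℝ) = (m s : ℝ)
      rw [ha_def, hc_def]
      field_simp
      ring
    have hZ1 : (a • ((n (s-1) : ℝ), (m (s-1) : ℝ)) + c • ((i:ℝ), (j:ℝ))).1 ≤ (n s : ℝ) := by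
      by_contra hgt
      push_neg at hgt
      exact killH h hss hZmem hZ2 hgt
    have hZ1' : a * (n (s-1) : ℝ) + c * (i : ℝ) ≤ (n s : ℝ) := hZ1
    have hkey : (i : ℝ) * ((m (s-1) : ℝ) - m s) ≤ (n s : ℝ) * ((m (s-1) : ℝ) - j) := by
      have h1 : c * (i:ℝ) ≤ (n s : ℝ) := by
        have : 0 ≤ a * (n (s-1) : ℝ) := mul_nonneg (le_of_lt ha) (Nat.cast_nonneg _)
        linarith
      rw [hc_def] at h1
      rw [div_mul_eq_mul_div, div_le_iff₀ hden] at h1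
      nlinarith
    have hfin : (i : ℝ) ≤ (n s : ℝ) * (m (s-1) : ℝ) := by
      have h1 : (1:ℝ) ≤ (m (s-1) : ℝ) - m s := by
        have : m s + 1 ≤ m (s-1) := hmlt
        have := (Nat.cast_le (α := ℝ)).2 this
        push_cast at this
        linarith
      nlinarith [Nat.cast_nonneg (α := ℝ) i, Nat.cast_nonneg (α := ℝ) j,
        Nat.cast_nonneg (α := ℝ) (n s)]
    have : i ≤ n s * m (s-1) := by exact_mod_cast hfin
    omega

lemma boundY {b : ℕ → ℕ → ℂ} {s : ℕ} {n m : ℕ → ℕ}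
    (h : IsNewtonVertexData b s n m) (hs : 2 < s) :
    ∀ i j : ℕ, b i j ≠ 0 → j ≤ m 1 * n 2 + m 1 := by
  intro i j hb
  have hs1 : 1 ∈ Icc 1 s := by constructor <;> omega
  have hs2 : 2 ∈ Icc 1 s := by constructor <;> omega
  have hnlt : n 1 < n 2 := h.2.1 hs1 hs2 (by omega)
  by_cases hi : n 1 ≤ i
  · have hle : j ≤ m 1 := by
      by_contra hnj
      push_neg at hnj
      have hZ : ((n 1 : ℝ), (j : ℝ)) ∈ newtonPolygon b :=
        quad_subset b hb ⟨show (n 1 : ℝ) ≤ i by exact_mod_cast hi, le_refl _⟩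
      exact killV h hs1 hZ rfl (show (m 1 : ℝ) < j by exact_mod_cast hnj)
    calc j ≤ m 1 := hle
      _ ≤ m 1 * n 2 + m 1 := by omega
  · push_neg at hi
    have hir : (i:ℝ) < n 1 := by exact_mod_cast hi
    have hnr : (n 1 : ℝ) < n 2 := by exact_mod_cast hnlt
    set a : ℝ := ((n 2 : ℝ) - n 1)/((n 2 : ℝ) - i) with ha_def
    set c : ℝ := ((n 1 : ℝ) - i)/((n 2 : ℝ) - i) with hc_def
    have hden : (0:ℝ) < (n 2 : ℝ) - i := by linarith
    have ha : 0 < a := div_pos (by linarith) hden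
    have hc : 0 < c := div_pos (by linarith) hden
    have hac : a + c = 1 := by rw [ha_def, hc_def]; field_simp; ring
    have hZmem : a • ((i:ℝ), (j:ℝ)) + c • ((n 2 : ℝ), (m 2 : ℝ)) ∈ newtonPolygon b :=
      (np_convex b) (mem_np_self b hb) (vertex_mem_np h hs2) (le_of_lt ha) (le_of_lt hc) hac
    have hZ1 : (a • ((i:ℝ), (j:ℝ)) + c • ((n 2 : ℝ), (m 2 : ℝ))).1 = (n 1 : ℝ) := by
      show a * (i : ℝ) + c * (n 2 : ℝ) = (n 1 : ℝ)
      rw [ha_def, hc_def]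
      field_simp
      ring
    have hZ2 : (a • ((i:ℝ), (j:ℝ)) + c • ((n 2 : ℝ), (m 2 : ℝ))).2 ≤ (m 1 : ℝ) := by
      by_contra hgt
      push_neg at hgt
      exact killV h hs1 hZmem hZ1 hgt
    have hZ2' : a * (j : ℝ) + c * (m 2 : ℝ) ≤ (m 1 : ℝ) := hZ2
    have hkey : (j : ℝ) * ((n 2 : ℝ) - n 1) ≤ (m 1 : ℝ) * ((n 2 : ℝ) - i) := by
      have h1 : a * (j:ℝ) ≤ (m 1 : ℝ) := by
        have : 0 ≤ c * (m 2 : ℝ) := mul_nonneg (le_of_lt hc) (Nat.cast_nonneg _)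
        linarith
      rw [ha_def] at h1
      rw [div_mul_eq_mul_div, div_le_iff₀ hden] at h1
      nlinarith
    have hfin : (j : ℝ) ≤ (m 1 : ℝ) * (n 2 : ℝ) := by
      have h1 : (1:ℝ) ≤ (n 2 : ℝ) - n 1 := by
        have : n 1 + 1 ≤ n 2 := hnlt
        have := (Nat.cast_le (α := ℝ)).2 this
        push_cast at this
        linarith
      nlinarith [Nat.cast_nonneg (α := ℝ) j, Nat.cast_nonneg (α := ℝ) i,
        Nat.cast_nonneg (α := ℝ) (m 1)]
    have : j ≤ m 1 * n 2 := by exact_mod_cast hfin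
    omega

lemma n_lt {b : ℕ → ℕ → ℂ} {s : ℕ} {n m : ℕ → ℕ}
    (h : IsNewtonVertexData b s n m) {u v : ℕ} (hu : 1 ≤ u) (huv : u < v) (hv : v ≤ s) :
    (n u : ℝ) < n v := by
  have := h.2.1 (⟨hu, le_trans (le_of_lt huv) hv⟩ : u ∈ Icc 1 s)
    (⟨le_trans hu (le_of_lt huv), hv⟩ : v ∈ Icc 1 s) huv
  exact_mod_cast this

lemma m_lt {b : ℕ → ℕ → ℂ} {s : ℕ} {n m : ℕ → ℕ}
    (h : IsNewtonVertexData b s n m) {u v : ℕ} (hu : 1 ≤ u) (huv : u < v) (hv : v ≤ s) :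
    (m v : ℝ) < m u := by
  have := h.2.2.1 (⟨hu, le_trans (le_of_lt huv) hv⟩ : u ∈ Icc 1 s)
    (⟨le_trans hu (le_of_lt huv), hv⟩ : v ∈ Icc 1 s) huv
  exact_mod_cast this

lemma conc {b : ℕ → ℕ → ℂ} {s : ℕ} {n m : ℕ → ℕ}
    (h : IsNewtonVertexData b s n m) {v : ℕ} (hv1 : 1 ≤ v) (hv2 : v + 2 ≤ s) :
    ((n (v+2) : ℝ) - n (v+1)) * ((m v : ℝ) - m (v+1)) ≤
      ((n (v+1) : ℝ) - n v) * ((m (v+1) : ℝ) - m (v+2)) := by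
  by_contra hcon
  push_neg at hcon
  have hn1 : (n v : ℝ) < n (v+1) := n_lt h hv1 (by omega) (by omega)
  have hn2 : (n (v+1) : ℝ) < n (v+2) := n_lt h (by omega) (by omega) hv2
  have hm1 : (m (v+1) : ℝ) < m v := m_lt h hv1 (by omega) (by omega)
  have hm2 : (m (v+2) : ℝ) < m (v+1) := m_lt h (by omega) (by omega) hv2
  have hden : (0:ℝ) < (n (v+2) : ℝ) - n v := by linarith
  set a : ℝ := ((n (v+2) : ℝ) - n (v+1))/((n (v+2) : ℝ) - n v) with ha_def
  set c : ℝ := ((n (v+1) : ℝ) - n v)/((n (v+2) : ℝ) - n v) with hc_def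
  have ha : 0 < a := div_pos (by linarith) hden
  have hc : 0 < c := div_pos (by linarith) hden
  have hac : a + c = 1 := by rw [ha_def, hc_def]; field_simp; ring
  have hvmem : v ∈ Icc 1 s := by constructor <;> omega
  have hv1mem : v + 1 ∈ Icc 1 s := by constructor <;> omega
  have hv2mem : v + 2 ∈ Icc 1 s := by constructor <;> omega
  have hZmem : a • ((n v : ℝ), (m v : ℝ)) + c • ((n (v+2) : ℝ), (m (v+2) : ℝ)) ∈ newtonPolygon b :=
    (np_convex b) (vertex_mem_np h hvmem) (vertex_mem_np h hv2mem) (le_of_lt ha) (le_of_lt hc) hac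
  have hZ1 : (a • ((n v : ℝ), (m v : ℝ)) + c • ((n (v+2) : ℝ), (m (v+2) : ℝ))).1
      = (n (v+1) : ℝ) := by
    show a * (n v : ℝ) + c * (n (v+2) : ℝ) = (n (v+1) : ℝ)
    rw [ha_def, hc_def]
    field_simp
    ring
  have hZ2 : (m (v+1) : ℝ) <
      (a • ((n v : ℝ), (m v : ℝ)) + c • ((n (v+2) : ℝ), (m (v+2) : ℝ))).2 := by
    show (m (v+1) : ℝ) < a * (m v : ℝ) + c * (m (v+2) : ℝ)
    rw [ha_def, hc_def, div_mul_eq_mul_div, div_mul_eq_mul_div, ← add_div,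
      lt_div_iff₀ hden]
    nlinarith
  exact killV h hv1mem hZmem hZ1 hZ2

lemma mono {b : ℕ → ℕ → ℂ} {s : ℕ} {n m : ℕ → ℕ}
    (h : IsNewtonVertexData b s n m) {u v : ℕ} (hu : 1 ≤ u) (huv : u ≤ v) (hv : v + 1 ≤ s) :
    ((n (v+1) : ℝ) - n v) * ((m u : ℝ) - m (u+1)) ≤
      ((n (u+1) : ℝ) - n u) * ((m v : ℝ) - m (v+1)) := by
  induction v, huv using Nat.le_induction with
  | base => exact le_refl _
  | succ v hv' ih =>
    have hvs : v + 1 ≤ s := by omega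
    have ihv := ih hvs
    have hcv := conc h (by omega : 1 ≤ v) (by omega : v + 2 ≤ s)
    have hdu : (0:ℝ) < (m u : ℝ) - m (u+1) := by
      have := m_lt h hu (by omega : u < u + 1) (by omega); linarith
    have hdv : (0:ℝ) < (m v : ℝ) - m (v+1) := by
      have := m_lt h (by omega : 1 ≤ v) (by omega : v < v + 1) (by omega); linarith
    have hdv1 : (0:ℝ) < (m (v+1) : ℝ) - m (v+2) := by
      have := m_lt h (by omega : 1 ≤ v+1) (by omega : v+1 < v + 2) (by omega); linarith
    have heu : (0:ℝ) < (n (u+1) : ℝ) - n u := by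
      have := n_lt h hu (by omega : u < u + 1) (by omega); linarith
    nlinarith [mul_le_mul_of_nonneg_right ihv (le_of_lt hdv1),
      mul_le_mul_of_nonneg_right hcv (le_of_lt hdu), mul_pos hdv hdu]

lemma vertexmax {b : ℕ → ℕ → ℂ} {s : ℕ} {n m : ℕ → ℕ}
    (h : IsNewtonVertexData b s n m) {k : ℕ} (hk1 : 1 ≤ k) (hk2 : k ≤ s) (lam : ℝ)
    (Hlow : ∀ u, 1 ≤ u → u < k → lam * ((m u : ℝ) - m (u+1)) ≤ (n (u+1) : ℝ) - n u)
    (Hhigh : ∀ u, k ≤ u → u + 1 ≤ s → (n (u+1) : ℝ) - n u ≤ lam * ((m u : ℝ) - m (u+1))) :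
    ∀ t, 1 ≤ t → t ≤ s → (n t : ℝ) + lam * m t ≤ (n k : ℝ) + lam * m k := by
  intro t ht1 ht2
  rcases le_or_gt t k with htk | htk
  · have aux : ∀ w, w ≤ k - t → (n (k - w) : ℝ) + lam * m (k - w) ≤ (n k : ℝ) + lam * m k := by
      intro w
      induction w with
      | zero => intro _; simp
      | succ w ih =>
        intro hw
        have ih' := ih (by omega)
        have hu1 : 1 ≤ k - (w+1) := by omega
        have hu2 : k - (w+1) < k := by omega
        have hstep := Hlow (k - (w+1)) hu1 hu2
        have : k - (w+1) + 1 = k - w := by omega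
        rw [this] at hstep
        linarith
    have := aux (k - t) (le_refl _)
    have heq : k - (k - t) = t := by omega
    rw [heq] at this
    exact this
  · have aux : ∀ w, k ≤ w → w ≤ s → (n w : ℝ) + lam * m w ≤ (n k : ℝ) + lam * m k := by
      intro w hkw
      induction w, hkw using Nat.le_induction with
      | base => intro _; simp
      | succ w hkw ih =>
        intro hws
        have ih' := ih (by omega)
        have hstep := Hhigh w hkw (by omega)
        linarith
    exact aux t (le_of_lt htk) ht2

set_option maxHeartbeats 1000000 in
lemma argmax_bound {b : ℕ → ℕ → ℂ} {s : ℕ} {n m : ℕ → ℕ}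
    (h : IsNewtonVertexData b s n m) (hs : 2 < s)
    (lam : ℝ) (hlam : 0 < lam) (E D : ℕ) (hE : 1 ≤ E) (hD : 1 ≤ D)
    (hED : lam * D = E) :
    ∃ u, u ∈ Icc 1 s ∧
      ∀ i j : ℕ, b i j ≠ 0 → (i : ℝ) + lam * j ≤ (n u : ℝ) + lam * m u := by
  classical
  set Bx : ℕ := n s * m (s-1) + n s with hBx
  set By : ℕ := m 1 * n 2 + m 1 with hBy
  set T : Set (ℕ × ℕ) := {z | b z.1 z.2 ≠ 0} with hT
  have hsub : T ⊆ (Iic Bx) ×ˢ (Iic By) := by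
    rintro ⟨i, j⟩ hz
    exact ⟨boundX h hs i j hz, boundY h hs i j hz⟩
  have hfin : T.Finite := Set.Finite.subset ((Set.finite_Iic Bx).prod (Set.finite_Iic By)) hsub
  set F : Finset (ℕ × ℕ) := hfin.toFinset with hF
  have hmemF : ∀ z : ℕ × ℕ, z ∈ F ↔ b z.1 z.2 ≠ 0 := by
    intro z; rw [hF, Set.Finite.mem_toFinset]; rfl
  have h1mem : 1 ∈ Icc 1 s := by constructor <;> omega
  have hne : F.Nonempty := ⟨(n 1, m 1), (hmemF _).2 (vertex_nonzero h h1mem)⟩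
  set f : ℕ × ℕ → ℝ := fun z => (z.1 : ℝ) + lam * z.2 with hf
  obtain ⟨A0, hA0, hmax0⟩ := F.exists_max_image f hne
  set F' : Finset (ℕ × ℕ) := F.filter (fun z => f z = f A0) with hF'
  have hneF' : F'.Nonempty := ⟨A0, by simp [hF', hA0]⟩
  obtain ⟨A, hAF', hmaxA⟩ := F'.exists_max_image (fun z => z.1) hneF'
  have hAF : A ∈ F := (Finset.mem_filter.1 hAF').1
  have hAeq : f A = f A0 := (Finset.mem_filter.1 hAF').2
  have hTmax : ∀ z ∈ F, f z ≤ f A := by intro z hz; rw [hAeq]; exact hmax0 z hz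
  have hTtie : ∀ z ∈ F, f z = f A → z.1 ≤ A.1 := by
    intro z hz hfz
    exact hmaxA z (Finset.mem_filter.2 ⟨hz, by rw [hfz, hAeq]⟩)
  -- the perturbation
  set η : ℝ := 1 / (D * (By + 1)) with hη_def
  have hDpos : (0:ℝ) < D := by exact_mod_cast hD
  have hBy1 : (0:ℝ) < (By:ℝ) + 1 := by positivity
  have hη : 0 < η := by rw [hη_def]; positivity
  have hηlam : η ≤ lam := by
    have hlameq : lam = E / D := by
      field_simp at hED ⊢; linarith [hED]
    have h1 : η ≤ 1 / (D:ℝ) := by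
      rw [hη_def]
      apply one_div_le_one_div_of_le hDpos
      nlinarith [Nat.cast_nonneg (α := ℝ) By]
    have h2 : (1:ℝ) / D ≤ E / D := by
      apply div_le_div_of_nonneg_right ?_ hDpos.le
      exact_mod_cast hE
    rw [hlameq]; linarith
  have hA2By : A.2 ≤ By := ((hsub ((hmemF A).1 hAF)).2 : A.2 ∈ Iic By)
  -- halfspace bounds
  have HS1 : ∀ Z ∈ newtonPolygon b, Z.1 + lam * Z.2 ≤ f A := by
    apply halfspace_bound b lam (f A) (le_of_lt hlam)
    intro i j hb
    exact hTmax (i, j) ((hmemF (i, j)).2 hb)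
  have HS2 : ∀ Z ∈ newtonPolygon b, Z.1 + (lam - η) * Z.2 ≤ (A.1 : ℝ) + (lam - η) * A.2 := by
    apply halfspace_bound b (lam - η) _ (by linarith)
    intro i j hb
    have hzF : (i, j) ∈ F := (hmemF (i, j)).2 hb
    have hle := hTmax _ hzF
    rcases eq_or_lt_of_le hle with heq | hlt
    · -- tie
      have hi : i ≤ A.1 := hTtie _ hzF heq
      have hir : (i:ℝ) ≤ A.1 := by exact_mod_cast hi
      have hfz : (i:ℝ) + lam * j = (A.1 : ℝ) + lam * A.2 := heq
      have hj : (A.2 : ℝ) ≤ j := by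
        by_contra hcon
        push_neg at hcon
        nlinarith
      nlinarith
    · -- strict: integrality gap
      have hlt' : (i:ℝ) + lam * j < (A.1 : ℝ) + lam * A.2 := hlt
      have hq : (0:ℝ) < ((A.1 : ℝ) + lam * A.2 - ((i:ℝ) + lam * j)) * D :=
        mul_pos (by linarith) hDpos
      set q : ℤ := (A.1 : ℤ) * D + E * A.2 - (i : ℤ) * D - E * j with hq_def
      have hqr : (q : ℝ) = ((A.1 : ℝ) + lam * A.2 - ((i:ℝ) + lam * j)) * D := by
        rw [hq_def]
        push_cast
        rw [← hED]
        ring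
      have hqpos : 0 < q := by
        have : (0:ℝ) < (q:ℝ) := by rw [hqr]; exact hq
        exact_mod_cast this
      have hq1 : (1:ℝ) ≤ (q:ℝ) := by exact_mod_cast hqpos
      rw [hqr] at hq1
      -- η * A.2 < gap
      have hA2r : (A.2 : ℝ) ≤ By := by exact_mod_cast hA2By
      have hsmall : η * (By:ℝ) * D < 1 := by
        rw [hη_def]
        rw [div_mul_eq_mul_div, div_mul_eq_mul_div, div_lt_iff₀ (by positivity)]
        nlinarith
      have hgap : η * (A.2 : ℝ) < (A.1 : ℝ) + lam * A.2 - ((i:ℝ) + lam * j) := by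
        have e1 : η * (A.2:ℝ) * D ≤ η * (By:ℝ) * D := by
          apply mul_le_mul_of_nonneg_right _ (le_of_lt hDpos)
          exact mul_le_mul_of_nonneg_left hA2r (le_of_lt hη)
        have e2 : η * (A.2:ℝ) * D < ((A.1 : ℝ) + lam * A.2 - ((i:ℝ) + lam * j)) * D := by
          linarith
        exact lt_of_mul_lt_mul_right e2 (le_of_lt hDpos)
      have hj0 : (0:ℝ) ≤ (j:ℝ) := Nat.cast_nonneg _
      have := mul_nonneg (le_of_lt hη) hj0
      linarith [hgap]
  -- A is an extreme point
  have hAP : ((A.1 : ℝ), (A.2 : ℝ)) ∈ newtonPolygon b := mem_np_self b ((hmemF A).1 hAF)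
  have hextA : ((A.1 : ℝ), (A.2 : ℝ)) ∈ Set.extremePoints ℝ (newtonPolygon b) := by
    refine ⟨hAP, ?_⟩
    intro X hX Y hY hseg
    obtain ⟨a, c, ha, hc, hac, heq⟩ := hseg
    have heqc : a * X.1 + c * Y.1 = (A.1 : ℝ) ∧ a * X.2 + c * Y.2 = (A.2 : ℝ) := by
      rw [Prod.ext_iff] at heq
      simpa [Prod.smul_def, smul_eq_mul] using heq
    obtain ⟨heq1, heq2⟩ := heqc
    have hfA : f A = (A.1 : ℝ) + lam * A.2 := rfl
    have hfX : X.1 + lam * X.2 ≤ (A.1 : ℝ) + lam * A.2 := by rw [← hfA]; exact HS1 X hX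
    have hfY : Y.1 + lam * Y.2 ≤ (A.1 : ℝ) + lam * A.2 := by rw [← hfA]; exact HS1 Y hY
    have hgX := HS2 X hX
    have hgY := HS2 Y hY
    have hcomb : a * (X.1 + lam * X.2) + c * (Y.1 + lam * Y.2) = (A.1 : ℝ) + lam * A.2 := by
      rw [show a * (X.1 + lam * X.2) + c * (Y.1 + lam * Y.2)
          = (a * X.1 + c * Y.1) + lam * (a * X.2 + c * Y.2) from by ring, heq1, heq2]
    have hacS : a * ((A.1 : ℝ) + lam * A.2) + c * ((A.1 : ℝ) + lam * A.2)
        = (A.1 : ℝ) + lam * A.2 := by rw [← add_mul, hac, one_mul]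
    have hfXeq : X.1 + lam * X.2 = (A.1 : ℝ) + lam * A.2 := by
      have h1 : a * (X.1 + lam * X.2) ≤ a * ((A.1 : ℝ) + lam * A.2) :=
        mul_le_mul_of_nonneg_left hfX ha.le
      have h2 : c * (Y.1 + lam * Y.2) ≤ c * ((A.1 : ℝ) + lam * A.2) :=
        mul_le_mul_of_nonneg_left hfY hc.le
      have h3 : a * ((A.1 : ℝ) + lam * A.2) ≤ a * (X.1 + lam * X.2) := by linarith
      have h4 : a * (X.1 + lam * X.2) = a * ((A.1 : ℝ) + lam * A.2) := le_antisymm h1 h3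
      exact mul_left_cancel₀ (ne_of_gt ha) h4
    have hfYeq : Y.1 + lam * Y.2 = (A.1 : ℝ) + lam * A.2 := by
      have h1 : c * (Y.1 + lam * Y.2) ≤ c * ((A.1 : ℝ) + lam * A.2) :=
        mul_le_mul_of_nonneg_left hfY hc.le
      have h2 : a * (X.1 + lam * X.2) ≤ a * ((A.1 : ℝ) + lam * A.2) :=
        mul_le_mul_of_nonneg_left hfX ha.le
      have h3 : c * ((A.1 : ℝ) + lam * A.2) ≤ c * (Y.1 + lam * Y.2) := by linarith
      have h4 : c * (Y.1 + lam * Y.2) = c * ((A.1 : ℝ) + lam * A.2) := le_antisymm h1 h3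
      exact mul_left_cancel₀ (ne_of_gt hc) h4
    have hX2 : (A.2 : ℝ) ≤ X.2 := by
      have hη2 : η * (A.2 : ℝ) ≤ η * X.2 := by nlinarith [hfXeq, hgX]
      exact le_of_mul_le_mul_left hη2 hη
    have hY2 : (A.2 : ℝ) ≤ Y.2 := by
      have hη2 : η * (A.2 : ℝ) ≤ η * Y.2 := by nlinarith [hfYeq, hgY]
      exact le_of_mul_le_mul_left hη2 hη
    have hacA : a * (A.2 : ℝ) + c * (A.2 : ℝ) = (A.2 : ℝ) := by rw [← add_mul, hac, one_mul]
    have hX2e : X.2 = (A.2 : ℝ) := by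
      have h1 : c * (A.2 : ℝ) ≤ c * Y.2 := mul_le_mul_of_nonneg_left hY2 hc.le
      have h2 : a * X.2 ≤ a * (A.2 : ℝ) := by linarith
      exact le_antisymm (le_of_mul_le_mul_left h2 ha) hX2
    have hY2e : Y.2 = (A.2 : ℝ) := by
      have h1 : a * (A.2 : ℝ) ≤ a * X.2 := mul_le_mul_of_nonneg_left hX2 ha.le
      have h2 : c * Y.2 ≤ c * (A.2 : ℝ) := by linarith
      exact le_antisymm (le_of_mul_le_mul_left h2 hc) hY2
    have hX1e : X.1 = (A.1 : ℝ) := by rw [hX2e] at hfXeq; linarith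
    have hY1e : Y.1 = (A.1 : ℝ) := by rw [hY2e] at hfYeq; linarith
    ext
    · exact hX1e
    · exact hX2e
  rw [h.2.2.2] at hextA
  obtain ⟨u, hu, hup⟩ := hextA
  refine ⟨u, hu, ?_⟩
  intro i j hb
  have hnm : (n u : ℝ) = A.1 ∧ (m u : ℝ) = A.2 := by
    rw [Prod.ext_iff] at hup
    simpa using hup
  obtain ⟨hn, hm⟩ := hnm
  rw [hn, hm]
  exact hTmax (i, j) ((hmemF (i, j)).2 hb)

set_option maxHeartbeats 1000000 in
/-- Case 4: if `s > 2`, `2 ≤ k ≤ s-1`, `(γ,d) = (n k, m k)`,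
`l₁ = (n_{k+1}-n_k)/(m_k-m_{k+1})`, `l₁+l₂ = (n_k-n_{k-1})/(m_{k-1}-m_k)`, and
`T_{k-1} ≤ δ ≤ T_k`, then for every `(i,j)` with `b_{ij} ≠ 0`:
`γ + l₁ d ≥ i + l₁ j`, `γ + l₁ d ≥ l₁ δ`, and
`(l₁+l₂) δ ≥ γ + (l₁+l₂) d ≥ i + (l₁+l₂) j`. -/
theorem stmt4 (b : ℕ → ℕ → ℂ) (s : ℕ) (n m : ℕ → ℕ)
    (h : IsNewtonVertexData b s n m) (hs : 2 < s)
    (k : ℕ) (hk1 : 2 ≤ k) (hk2 : k ≤ s - 1)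
    (δ : ℕ) (hδ : 2 ≤ δ) (l₁ l₂ Tkm Tk : ℝ)
    (hl1 : l₁ = ((n (k+1) : ℝ) - (n k : ℝ)) / ((m k : ℝ) - (m (k+1) : ℝ)))
    (hl12 : l₁ + l₂ = ((n k : ℝ) - (n (k-1) : ℝ)) / ((m (k-1) : ℝ) - (m k : ℝ)))
    (hTkm : Tkm = (m k : ℝ) + (n k : ℝ) / (l₁ + l₂))
    (hTk : Tk = (m k : ℝ) + (n k : ℝ) / l₁)
    (hδ1 : Tkm ≤ (δ : ℝ)) (hδ2 : (δ : ℝ) ≤ Tk) :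
    ∀ i j : ℕ, b i j ≠ 0 →
      ((i : ℝ) + l₁ * (j : ℝ) ≤ (n k : ℝ) + l₁ * (m k : ℝ)) ∧
      (l₁ * (δ : ℝ) ≤ (n k : ℝ) + l₁ * (m k : ℝ)) ∧
      ((n k : ℝ) + (l₁ + l₂) * (m k : ℝ) ≤ (l₁ + l₂) * (δ : ℝ)) ∧
      ((i : ℝ) + (l₁ + l₂) * (j : ℝ) ≤ (n k : ℝ) + (l₁ + l₂) * (m k : ℝ)) := by
  intro i j hb
  have hks : k + 1 ≤ s := by omega
  have hk1e : k - 1 + 1 = k := by omega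
  have hn1 : (n k : ℝ) < n (k+1) := n_lt h (by omega) (by omega) hks
  have hm1 : (m (k+1) : ℝ) < m k := m_lt h (by omega) (by omega) hks
  have hn0 : (n (k-1) : ℝ) < n k := n_lt h (by omega) (by omega) (by omega)
  have hm0 : (m k : ℝ) < m (k-1) := m_lt h (by omega) (by omega) (by omega)
  have hl1pos : 0 < l₁ := by rw [hl1]; exact div_pos (by linarith) (by linarith)
  have hLpos : 0 < l₁ + l₂ := by rw [hl12]; exact div_pos (by linarith) (by linarith)
  have hnn1 : n k < n (k+1) := h.2.1 ⟨by omega, by omega⟩ ⟨by omega, hks⟩ (by omega)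
  have hmm1 : m (k+1) < m k := h.2.2.1 ⟨by omega, by omega⟩ ⟨by omega, hks⟩ (by omega)
  have hnn0 : n (k-1) < n k := h.2.1 ⟨by omega, by omega⟩ ⟨by omega, by omega⟩ (by omega)
  have hmm0 : m k < m (k-1) := h.2.2.1 ⟨by omega, by omega⟩ ⟨by omega, by omega⟩ (by omega)
  have hc1 : (i : ℝ) + l₁ * j ≤ (n k : ℝ) + l₁ * m k := by
    have hED : l₁ * ((m k - m (k+1) : ℕ) : ℝ) = ((n (k+1) - n k : ℕ) : ℝ) := by
      rw [Nat.cast_sub (le_of_lt hmm1), Nat.cast_sub (le_of_lt hnn1), hl1]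
      exact div_mul_cancel₀ _ (ne_of_gt (by linarith : (0:ℝ) < (m k : ℝ) - m (k+1)))
    obtain ⟨u, hu, hbound⟩ := argmax_bound h hs l₁ hl1pos (n (k+1) - n k) (m k - m (k+1))
      (by omega) (by omega) hED
    have Hlow : ∀ w, 1 ≤ w → w < k → l₁ * ((m w : ℝ) - m (w+1)) ≤ (n (w+1) : ℝ) - n w := by
      intro w hw1 hwk
      have hdw : (0:ℝ) < (m w : ℝ) - m (w+1) := by
        have := m_lt h hw1 (by omega : w < w + 1) (by omega); linarith
      have hmono := mono h hw1 (le_of_lt hwk) hks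
      rw [hl1, div_mul_eq_mul_div, div_le_iff₀ (by linarith)]
      nlinarith
    have Hhigh : ∀ w, k ≤ w → w + 1 ≤ s → (n (w+1) : ℝ) - n w ≤ l₁ * ((m w : ℝ) - m (w+1)) := by
      intro w hkw hws
      have hmono := mono h (by omega : 1 ≤ k) hkw hws
      rw [hl1, div_mul_eq_mul_div, le_div_iff₀ (by linarith)]
      nlinarith
    have hvm := vertexmax h (by omega : 1 ≤ k) (by omega : k ≤ s) l₁ Hlow Hhigh u hu.1 hu.2
    calc (i : ℝ) + l₁ * j ≤ (n u : ℝ) + l₁ * m u := hbound i j hb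
      _ ≤ (n k : ℝ) + l₁ * m k := hvm
  have hc4 : (i : ℝ) + (l₁ + l₂) * j ≤ (n k : ℝ) + (l₁ + l₂) * m k := by
    have hED : (l₁ + l₂) * ((m (k-1) - m k : ℕ) : ℝ) = ((n k - n (k-1) : ℕ) : ℝ) := by
      rw [Nat.cast_sub (le_of_lt hmm0), Nat.cast_sub (le_of_lt hnn0), hl12]
      exact div_mul_cancel₀ _ (ne_of_gt (by linarith : (0:ℝ) < (m (k-1) : ℝ) - m k))
    obtain ⟨u, hu, hbound⟩ := argmax_bound h hs (l₁ + l₂) hLpos (n k - n (k-1)) (m (k-1) - m k)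
      (by omega) (by omega) hED
    have Hlow : ∀ w, 1 ≤ w → w < k →
        (l₁ + l₂) * ((m w : ℝ) - m (w+1)) ≤ (n (w+1) : ℝ) - n w := by
      intro w hw1 hwk
      have hdw : (0:ℝ) < (m w : ℝ) - m (w+1) := by
        have := m_lt h hw1 (by omega : w < w + 1) (by omega); linarith
      have hmono := mono h hw1 (by omega : w ≤ k - 1) (by omega : k - 1 + 1 ≤ s)
      rw [hk1e] at hmono
      rw [hl12, div_mul_eq_mul_div, div_le_iff₀ (by linarith)]
      nlinarith
    have Hhigh : ∀ w, k ≤ w → w + 1 ≤ s →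
        (n (w+1) : ℝ) - n w ≤ (l₁ + l₂) * ((m w : ℝ) - m (w+1)) := by
      intro w hkw hws
      have hmono := mono h (by omega : 1 ≤ k - 1) (by omega : k - 1 ≤ w) hws
      rw [hk1e] at hmono
      rw [hl12, div_mul_eq_mul_div, le_div_iff₀ (by linarith)]
      nlinarith
    have hvm := vertexmax h (by omega : 1 ≤ k) (by omega : k ≤ s) (l₁ + l₂) Hlow Hhigh u hu.1 hu.2
    calc (i : ℝ) + (l₁ + l₂) * j ≤ (n u : ℝ) + (l₁ + l₂) * m u := hbound i j hb
      _ ≤ (n k : ℝ) + (l₁ + l₂) * m k := hvm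
  refine ⟨hc1, ?_, ?_, hc4⟩
  · rw [hTk] at hδ2
    have hcancel : l₁ * ((n k : ℝ) / l₁) = (n k : ℝ) := by field_simp
    nlinarith [mul_le_mul_of_nonneg_left hδ2 (le_of_lt hl1pos)]
  · rw [hTkm] at hδ1
    have hcancel : (l₁ + l₂) * ((n k : ℝ) / (l₁ + l₂)) = (n k : ℝ) := by field_simp
    nlinarith [mul_le_mul_of_nonneg_left hδ1 (le_of_lt hLpos)]
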